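/- arXiv:1210.1290 — 2 statements merged into one kernel-verified Lean document; each statement's English description precedes it below -/
import Mathlib

section
/- If M = Δ₀ U† Π₀ U Δ₀ has eigenvalue 1/2 with unit eigenvector |φ₀⟩, then the vector Δ₀ U† (−Π₀ + (I − Π₀)) U |φ₀⟩ equals the zero vector; i.e., applying U, the phase flip −Π₀ + Π₁, then U† to |φ₀⟩ yields a state entirely in the range of I − Δ₀. -/
open Matrix

/-- If `M = Δ₀ U† Π₀ U Δ₀` has eigenvalue `1/2` with unit
eigenvector `|φ₀⟩`, then `Δ₀ U† (−Π₀ + (I − Π₀)) U |φ₀⟩ = 0`, i.e. applying `U`,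
the phase flip, then `U†` yields a state entirely in the range of `I − Δ₀`. -/
theorem stmt5 {n : ℕ} (U D₀ P₀ M : Matrix (Fin n) (Fin n) ℂ)
    (hU : U ∈ Matrix.unitaryGroup (Fin n) ℂ)
    (hDH : D₀.IsHermitian) (hD : D₀ * D₀ = D₀)
    (hPH : P₀.IsHermitian) (hP : P₀ * P₀ = P₀)
    (hM : M = D₀ * Uᴴ * P₀ * U * D₀)
    (φ : EuclideanSpace ℂ (Fin n)) (hφ : ‖φ‖ = 1)
    (heig : M.mulVec φ = ((1 / 2 : ℝ) : ℂ) • (φ : Fin n → ℂ)) :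
    (D₀ * Uᴴ * (-P₀ + (1 - P₀)) * U).mulVec φ = 0 := by
  have hUU : Uᴴ * U = 1 := by
    have := hU.1
    rwa [Matrix.star_eq_conjTranspose] at this
  have hDM : D₀ * M = M := by
    rw [hM]; simp only [← mul_assoc, hD]
  have hDφ : D₀.mulVec φ = φ := by
    have h1 : (D₀ * M).mulVec (φ : Fin n → ℂ) = D₀.mulVec (M.mulVec φ) :=
      Matrix.mulVec_mulVec _ _ _ |>.symm
    rw [hDM, heig, Matrix.mulVec_smul] at h1
    have h2 : ((1 / 2 : ℝ) : ℂ) ≠ 0 := by norm_num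
    exact (smul_right_injective (Fin n → ℂ) h2 h1).symm
  have hkey : (D₀ * Uᴴ * P₀ * U).mulVec (φ : Fin n → ℂ)
      = ((1 / 2 : ℝ) : ℂ) • (φ : Fin n → ℂ) := by
    calc (D₀ * Uᴴ * P₀ * U).mulVec (φ : Fin n → ℂ)
        = (D₀ * Uᴴ * P₀ * U).mulVec (D₀.mulVec φ) := by rw [hDφ]
      _ = M.mulVec φ := by rw [Matrix.mulVec_mulVec, ← hM]
      _ = _ := heig
  have hE : D₀ * Uᴴ * (-P₀ + (1 - P₀)) * U
      = D₀ * Uᴴ * U - (2 : ℂ) • (D₀ * Uᴴ * P₀ * U) := by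
    noncomm_ring
    module
  rw [hE, Matrix.sub_mulVec, Matrix.smul_mulVec, hkey,
    mul_assoc, hUU, mul_one, hDφ]
  have h3 : (2 : ℂ) * ((1 / 2 : ℝ) : ℂ) = 1 := by norm_num
  rw [smul_smul, h3, one_smul, sub_self]
end

section
/- For any three density operators ρ, σ, ξ on a finite-dimensional Hilbert space, F(ρ, σ)² + F(σ, ξ)² ≤ 1 + F(ρ, ξ), where F denotes the fidelity. -/
set_option maxHeartbeats 1000000

open Matrix
open scoped ComplexOrder InnerProductSpace

/-- The square root of a positive semidefinite matrix, as defined in the older Mathlib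
(`Matrix.PosSemidef.sqrt`, removed since). -/
noncomputable def Matrix.PosSemidef.sqrt {n : ℕ} {A : Matrix (Fin n) (Fin n) ℂ}
    (hA : A.PosSemidef) : Matrix (Fin n) (Fin n) ℂ :=
  hA.1.eigenvectorUnitary.1 * diagonal ((↑) ∘ (√·) ∘ hA.1.eigenvalues) *
    (star hA.1.eigenvectorUnitary : Matrix (Fin n) (Fin n) ℂ)

theorem Matrix.PosSemidef.posSemidef_sqrt {n : ℕ} {A : Matrix (Fin n) (Fin n) ℂ}
    (hA : A.PosSemidef) : hA.sqrt.PosSemidef := by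
  have hd : (diagonal ((↑) ∘ (√·) ∘ hA.1.eigenvalues : Fin n → ℂ)).PosSemidef :=
    PosSemidef.diagonal fun i => Complex.zero_le_real.mpr (Real.sqrt_nonneg _)
  exact hd.mul_mul_conjTranspose_same _

theorem Matrix.PosSemidef.sqrt_mul_self {n : ℕ} {A : Matrix (Fin n) (Fin n) ℂ}
    (hA : A.PosSemidef) : hA.sqrt * hA.sqrt = A := by
  have hU : (star hA.1.eigenvectorUnitary : Matrix (Fin n) (Fin n) ℂ) *
      hA.1.eigenvectorUnitary.1 = 1 := Unitary.star_mul_self_of_mem hA.1.eigenvectorUnitary.prop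
  conv_rhs => rw [hA.1.spectral_theorem, Unitary.conjStarAlgAut_apply]
  simp only [Matrix.PosSemidef.sqrt]
  calc _ = hA.1.eigenvectorUnitary.1 * (diagonal ((↑) ∘ (√·) ∘ hA.1.eigenvalues) *
        ((star hA.1.eigenvectorUnitary : Matrix (Fin n) (Fin n) ℂ) *
        hA.1.eigenvectorUnitary.1) * diagonal ((↑) ∘ (√·) ∘ hA.1.eigenvalues)) *
        (star hA.1.eigenvectorUnitary : Matrix (Fin n) (Fin n) ℂ) := by
          simp only [Matrix.mul_assoc]
    _ = _ := by
      rw [hU, Matrix.mul_one, diagonal_mul_diagonal]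
      congr 3
      funext i
      simp only [Function.comp_apply]
      rw [← Complex.ofReal_mul, Real.mul_self_sqrt (hA.eigenvalues_nonneg i)]
      rfl

noncomputable section FidelityHelpers

variable {n : ℕ}

/-- view a matrix as a vector in Euclidean space -/
def m2v (A : Matrix (Fin n) (Fin n) ℂ) : EuclideanSpace ℂ (Fin n × Fin n) :=
  (WithLp.equiv 2 _).symm (fun p => A p.1 p.2)

lemma inner_m2v (A B : Matrix (Fin n) (Fin n) ℂ) :
    ⟪m2v A, m2v B⟫_ℂ = (Aᴴ * B).trace := by
  simp only [PiLp.inner_apply, m2v, WithLp.equiv_symm_apply, PiLp.toLp_apply, RCLike.inner_apply,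
    Matrix.trace, Matrix.diag, Matrix.mul_apply, Matrix.conjTranspose_apply]
  rw [Fintype.sum_prod_type]
  rw [Finset.sum_comm]
  simp [mul_comm]

/-- Gram inequality for three unit vectors -/
lemma gram3 {E : Type*} [NormedAddCommGroup E] [InnerProductSpace ℂ E]
    (u v w : E) (hu : ‖u‖ = 1) (hv : ‖v‖ = 1) (hw : ‖w‖ = 1) :
    ‖⟪u, v⟫_ℂ‖ ^ 2 + ‖⟪w, v⟫_ℂ‖ ^ 2 ≤ 1 + ‖⟪u, w⟫_ℂ‖ := by
  set α := ⟪u, v⟫_ℂ with hα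
  set β := ⟪w, v⟫_ℂ with hβ
  set t := ‖⟪u, w⟫_ℂ‖ with ht
  set S := ‖α‖ ^ 2 + ‖β‖ ^ 2 with hS
  have hSnn : 0 ≤ S := by positivity
  have htnn : 0 ≤ t := norm_nonneg _
  rcases eq_or_lt_of_le hSnn with hS0 | hSpos
  · rw [← hS0]; linarith
  set z := α • u + β • w with hz
  have key : ∀ c : ℂ, (starRingEnd ℂ) c * c = ((‖c‖ ^ 2 : ℝ) : ℂ) := by
    intro c
    rw [mul_comm, Complex.mul_conj, Complex.normSq_eq_norm_sq]
  have hzv : ⟪z, v⟫_ℂ = (S : ℂ) := by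
    rw [hz, inner_add_left, inner_smul_left, inner_smul_left, ← hα, ← hβ, key, key, hS]
    push_cast; ring
  have hz2 : ‖z‖ ^ 2 ≤ S * (1 + t) := by
    have h1 : ‖z‖ ^ 2 = ‖α • u‖ ^ 2 + 2 * RCLike.re ⟪α • u, β • w⟫_ℂ + ‖β • w‖ ^ 2 :=
      norm_add_sq (𝕜 := ℂ) _ _
    have h2 : RCLike.re ⟪α • u, β • w⟫_ℂ ≤ ‖α‖ * ‖β‖ * t := by
      calc RCLike.re ⟪α • u, β • w⟫_ℂ ≤ ‖⟪α • u, β • w⟫_ℂ‖ := RCLike.re_le_norm _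
        _ = ‖α‖ * ‖β‖ * t := by
            rw [inner_smul_left, inner_smul_right, ht]
            simp [norm_mul, mul_assoc]
    have h3 : 2 * (‖α‖ * ‖β‖) ≤ S := by
      rw [hS]; nlinarith [sq_nonneg (‖α‖ - ‖β‖)]
    have h4 : ‖α • u‖ ^ 2 = ‖α‖ ^ 2 := by rw [norm_smul, hu, mul_one]
    have h5 : ‖β • w‖ ^ 2 = ‖β‖ ^ 2 := by rw [norm_smul, hw, mul_one]
    nlinarith [norm_nonneg α, norm_nonneg β]
  have hSz : S ≤ ‖z‖ := by
    have : S = RCLike.re ⟪z, v⟫_ℂ := by rw [hzv]; simp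
    rw [this]
    calc RCLike.re ⟪z, v⟫_ℂ ≤ ‖⟪z, v⟫_ℂ‖ := RCLike.re_le_norm _
      _ ≤ ‖z‖ * ‖v‖ := norm_inner_le_norm _ _
      _ = ‖z‖ := by rw [hv, mul_one]
  nlinarith

lemma tEL_mul (A B : Matrix (Fin n) (Fin n) ℂ) :
    Matrix.toEuclideanLin (A * B) =
      (Matrix.toEuclideanLin A).comp (Matrix.toEuclideanLin B) := by
  ext x
  simp [Matrix.toEuclideanLin_apply, Matrix.mulVec_mulVec]

lemma tEL_mul_apply (A B : Matrix (Fin n) (Fin n) ℂ) (x : EuclideanSpace ℂ (Fin n)) :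
    Matrix.toEuclideanLin (A * B) x =
      Matrix.toEuclideanLin A (Matrix.toEuclideanLin B x) := by
  rw [tEL_mul]; rfl

lemma tEL_one : Matrix.toEuclideanLin (1 : Matrix (Fin n) (Fin n) ℂ) = LinearMap.id := by
  ext x
  simp [Matrix.toEuclideanLin_apply]

/-- Extend `f ∘ h⁻¹` (defined on the range of `h`) to an isometry, when `‖f x‖ = ‖h x‖`. -/
lemma polar_lin {E : Type*} [NormedAddCommGroup E] [InnerProductSpace ℂ E]
    [FiniteDimensional ℂ E] (f h : E →ₗ[ℂ] E) (hnorm : ∀ x, ‖f x‖ = ‖h x‖) :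
    ∃ W : E →ₗᵢ[ℂ] E, ∀ x, W (h x) = f x := by
  have hker : LinearMap.ker h ≤ LinearMap.ker f := by
    intro x hx
    rw [LinearMap.mem_ker] at hx ⊢
    have := hnorm x
    rw [hx, norm_zero, norm_eq_zero] at this
    exact this
  have hgapp : ∀ x : E,
      (((LinearMap.ker h).liftQ f hker).comp h.quotKerEquivRange.symm.toLinearMap)
        ⟨h x, LinearMap.mem_range_self h x⟩ = f x := by
    intro x
    have h1 : h.quotKerEquivRange (Submodule.Quotient.mk x)
        = ⟨h x, LinearMap.mem_range_self h x⟩ := by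
      ext; exact h.quotKerEquivRange_apply_mk x
    have h2 : h.quotKerEquivRange.symm ⟨h x, LinearMap.mem_range_self h x⟩
        = Submodule.Quotient.mk x := by
      rw [← h1, LinearEquiv.symm_apply_apply]
    rw [LinearMap.comp_apply, LinearEquiv.coe_toLinearMap, h2]
    exact Submodule.liftQ_apply _ _ _
  have hgiso : ∀ s : LinearMap.range h,
      ‖(((LinearMap.ker h).liftQ f hker).comp h.quotKerEquivRange.symm.toLinearMap) s‖
        = ‖s‖ := by
    rintro ⟨s, x, rfl⟩
    rw [hgapp x, hnorm x]
    rfl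
  refine ⟨(LinearIsometry.extend ⟨_, hgiso⟩), fun x => ?_⟩
  calc (LinearIsometry.extend ⟨_, hgiso⟩) (h x)
      = (LinearIsometry.extend ⟨_, hgiso⟩)
          ((⟨h x, LinearMap.mem_range_self h x⟩ : LinearMap.range h) : E) := rfl
    _ = f x := by
        rw [LinearIsometry.extend_apply]
        exact hgapp x

/-- Polar decomposition, auxiliary version with opaque `H`. -/
lemma polar_aux (M H : Matrix (Fin n) (Fin n) ℂ) (hHps : H.PosSemidef)
    (hHsq : H * H = Mᴴ * M) :
    ∃ W : Matrix (Fin n) (Fin n) ℂ, W ∈ Matrix.unitaryGroup (Fin n) ℂ ∧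
      M = W * H := by
  have hnorm : ∀ x, ‖Matrix.toEuclideanLin M x‖ = ‖Matrix.toEuclideanLin H x‖ := by
    intro x
    have key : ∀ A : Matrix (Fin n) (Fin n) ℂ,
        ⟪Matrix.toEuclideanLin A x, Matrix.toEuclideanLin A x⟫_ℂ
          = ⟪x, Matrix.toEuclideanLin (Aᴴ * A) x⟫_ℂ := by
      intro A
      calc ⟪Matrix.toEuclideanLin A x, Matrix.toEuclideanLin A x⟫_ℂ
          = ⟪x, LinearMap.adjoint (Matrix.toEuclideanLin A) (Matrix.toEuclideanLin A x)⟫_ℂ :=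
            (LinearMap.adjoint_inner_right _ _ _).symm
        _ = ⟪x, Matrix.toEuclideanLin Aᴴ (Matrix.toEuclideanLin A x)⟫_ℂ := by
            rw [Matrix.toEuclideanLin_conjTranspose_eq_adjoint]
        _ = ⟪x, Matrix.toEuclideanLin (Aᴴ * A) x⟫_ℂ := by rw [tEL_mul_apply]
    have h1 : ⟪Matrix.toEuclideanLin M x, Matrix.toEuclideanLin M x⟫_ℂ
        = ⟪x, Matrix.toEuclideanLin (Mᴴ * M) x⟫_ℂ := key M
    have h2 : ⟪Matrix.toEuclideanLin H x, Matrix.toEuclideanLin H x⟫_ℂ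
        = ⟪x, Matrix.toEuclideanLin (Mᴴ * M) x⟫_ℂ := by
      rw [key H, hHps.1, hHsq]
    rw [norm_eq_sqrt_re_inner (𝕜 := ℂ), norm_eq_sqrt_re_inner (𝕜 := ℂ), h1, h2]
  obtain ⟨W', hW'⟩ := polar_lin (Matrix.toEuclideanLin M) (Matrix.toEuclideanLin H) hnorm
  refine ⟨Matrix.toEuclideanLin.symm W'.toLinearMap, ?_, ?_⟩
  · rw [Matrix.mem_unitaryGroup_iff']
    apply Matrix.toEuclideanLin.injective
    rw [tEL_one, Matrix.star_eq_conjTranspose, tEL_mul,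
      Matrix.toEuclideanLin_conjTranspose_eq_adjoint,
      Matrix.toEuclideanLin.apply_symm_apply]
    refine LinearMap.ext fun x => ?_
    refine ext_inner_right ℂ fun y => ?_
    rw [LinearMap.comp_apply, LinearMap.adjoint_inner_left, LinearMap.id_apply]
    exact W'.inner_map_map x y
  · apply Matrix.toEuclideanLin.injective
    rw [tEL_mul, Matrix.toEuclideanLin.apply_symm_apply]
    refine LinearMap.ext fun x => ?_
    exact (hW' x).symm

/-- Polar decomposition: `M = W * √(Mᴴ M)` with `W` unitary. -/
lemma polar_decomp (M : Matrix (Fin n) (Fin n) ℂ) :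
    ∃ W : Matrix (Fin n) (Fin n) ℂ, W ∈ Matrix.unitaryGroup (Fin n) ℂ ∧
      M = W * (Matrix.posSemidef_conjTranspose_mul_self M).sqrt :=
  polar_aux M _ (Matrix.posSemidef_conjTranspose_mul_self M).posSemidef_sqrt
    (Matrix.posSemidef_conjTranspose_mul_self M).sqrt_mul_self

lemma trace_nonneg' {P : Matrix (Fin n) (Fin n) ℂ} (hP : P.PosSemidef) :
    0 ≤ P.trace := by
  exact hP.trace_nonneg

lemma cnorm_of_nonneg {z : ℂ} (hz : 0 ≤ z) : ‖z‖ = z.re := by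
  obtain ⟨h1, h2⟩ := Complex.nonneg_iff.mp hz
  rw [Complex.norm_def, Complex.normSq_apply, ← h2]
  simpa using Real.sqrt_mul_self h1

/-- norm of a matrix viewed as a Euclidean vector, when `(AᴴA).trace = 1` -/
lemma m2v_norm_one {A : Matrix (Fin n) (Fin n) ℂ} (h : (Aᴴ * A).trace = 1) :
    ‖m2v A‖ = 1 := by
  rw [norm_eq_sqrt_re_inner (𝕜 := ℂ), inner_m2v, h]
  simp

/-- Cauchy–Schwarz bound: `‖tr (Q R R)‖ ≤ re (tr (R R))` for `Q` unitary, `R` hermitian. -/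
lemma cs_bound (Q R : Matrix (Fin n) (Fin n) ℂ) (hQ : Qᴴ * Q = 1) (hR : Rᴴ = R) :
    ‖(Q * (R * R)).trace‖ ≤ ((R * R).trace).re := by
  have h1 : (Q * (R * R)).trace = ⟪m2v R, m2v (Q * R)⟫_ℂ := by
    rw [inner_m2v, hR]
    rw [← Matrix.mul_assoc, Matrix.trace_mul_comm R (Q * R), Matrix.mul_assoc]
  have h2 : ⟪m2v R, m2v R⟫_ℂ = (R * R).trace := by rw [inner_m2v, hR]
  have h3 : ⟪m2v (Q * R), m2v (Q * R)⟫_ℂ = (R * R).trace := by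
    rw [inner_m2v, Matrix.conjTranspose_mul, Matrix.mul_assoc,
      ← Matrix.mul_assoc Qᴴ Q R, hQ, Matrix.one_mul, hR]
  have h0 : 0 ≤ RCLike.re ⟪m2v R, m2v R⟫_ℂ := inner_self_nonneg
  rw [h2, RCLike.re_to_complex] at h0
  calc ‖(Q * (R * R)).trace‖ = ‖⟪m2v R, m2v (Q * R)⟫_ℂ‖ := by rw [h1]
    _ ≤ ‖m2v R‖ * ‖m2v (Q * R)‖ := norm_inner_le_norm _ _
    _ = ((R * R).trace).re := by
        rw [norm_eq_sqrt_re_inner (𝕜 := ℂ), norm_eq_sqrt_re_inner (𝕜 := ℂ), h2, h3,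
          RCLike.re_to_complex]
        exact Real.mul_self_sqrt h0

lemma core (A B C W₁ W₂ W₃ H₁ H₂ H₃ R : Matrix (Fin n) (Fin n) ℂ)
    (hAh : Aᴴ = A) (hBh : Bᴴ = B) (hCh : Cᴴ = C)
    (hA1 : (A * A).trace = 1) (hB1 : (B * B).trace = 1) (hC1 : (C * C).trace = 1)
    (hW₁ : W₁ ∈ Matrix.unitaryGroup (Fin n) ℂ)
    (hW₂ : W₂ ∈ Matrix.unitaryGroup (Fin n) ℂ)
    (hW₃ : W₃ ∈ Matrix.unitaryGroup (Fin n) ℂ)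
    (hH₁ : H₁.PosSemidef) (hH₂ : H₂.PosSemidef) (hH₃ : H₃.PosSemidef)
    (hP₁ : B * A = W₁ * H₁) (hP₂ : C * B = W₂ * H₂) (hP₃ : C * A = W₃ * H₃)
    (hRh : Rᴴ = R) (hRH : R * R = H₃) :
    H₁.trace.re ^ 2 + H₂.trace.re ^ 2 ≤ 1 + H₃.trace.re := by
  -- unitary facts
  have w1 : W₁ᴴ * W₁ = 1 := by
    simpa [Matrix.star_eq_conjTranspose] using Matrix.mem_unitaryGroup_iff'.mp hW₁
  have w1' : W₁ * W₁ᴴ = 1 := by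
    simpa [Matrix.star_eq_conjTranspose] using Matrix.mem_unitaryGroup_iff.mp hW₁
  have w2 : W₂ᴴ * W₂ = 1 := by
    simpa [Matrix.star_eq_conjTranspose] using Matrix.mem_unitaryGroup_iff'.mp hW₂
  have w2' : W₂ * W₂ᴴ = 1 := by
    simpa [Matrix.star_eq_conjTranspose] using Matrix.mem_unitaryGroup_iff.mp hW₂
  have w3 : W₃ᴴ * W₃ = 1 := by
    simpa [Matrix.star_eq_conjTranspose] using Matrix.mem_unitaryGroup_iff'.mp hW₃
  have c1 : ∀ X : Matrix (Fin n) (Fin n) ℂ, W₁ᴴ * (W₁ * X) = X := fun X => by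
    rw [← Matrix.mul_assoc, w1, Matrix.one_mul]
  have c1' : ∀ X : Matrix (Fin n) (Fin n) ℂ, W₁ * (W₁ᴴ * X) = X := fun X => by
    rw [← Matrix.mul_assoc, w1', Matrix.one_mul]
  have c2 : ∀ X : Matrix (Fin n) (Fin n) ℂ, W₂ᴴ * (W₂ * X) = X := fun X => by
    rw [← Matrix.mul_assoc, w2, Matrix.one_mul]
  have c2' : ∀ X : Matrix (Fin n) (Fin n) ℂ, W₂ * (W₂ᴴ * X) = X := fun X => by
    rw [← Matrix.mul_assoc, w2', Matrix.one_mul]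
  -- the three unit vectors
  have hun : ‖m2v A‖ = 1 := m2v_norm_one (by rw [hAh, hA1])
  have hvn : ‖m2v (B * W₁)‖ = 1 := by
    apply m2v_norm_one
    simp only [Matrix.conjTranspose_mul, hBh, Matrix.mul_assoc]
    rw [Matrix.trace_mul_comm]
    simp only [Matrix.mul_assoc, w1', Matrix.mul_one]
    exact hB1
  have hwn : ‖m2v (C * (W₂ * W₁))‖ = 1 := by
    apply m2v_norm_one
    simp only [Matrix.conjTranspose_mul, hCh, Matrix.mul_assoc]
    rw [Matrix.trace_mul_comm]
    simp only [Matrix.mul_assoc, w1', Matrix.mul_one]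
    rw [Matrix.trace_mul_comm]
    simp only [Matrix.mul_assoc, w2', Matrix.mul_one]
    exact hC1
  -- inner products
  have hvu : ⟪m2v (B * W₁), m2v A⟫_ℂ = H₁.trace := by
    rw [inner_m2v]
    simp only [Matrix.conjTranspose_mul, hBh, Matrix.mul_assoc]
    rw [hP₁, c1]
  have hwv : ⟪m2v (C * (W₂ * W₁)), m2v (B * W₁)⟫_ℂ = H₂.trace := by
    rw [inner_m2v]
    simp only [Matrix.conjTranspose_mul, hCh, Matrix.mul_assoc]
    rw [← Matrix.mul_assoc C B W₁, hP₂, Matrix.mul_assoc, c2, Matrix.trace_mul_comm]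
    simp only [Matrix.mul_assoc, w1', Matrix.mul_one]
  have hwu : ⟪m2v (C * (W₂ * W₁)), m2v A⟫_ℂ
      = ((W₁ᴴ * (W₂ᴴ * W₃)) * (R * R)).trace := by
    rw [inner_m2v]
    simp only [Matrix.conjTranspose_mul, hCh, Matrix.mul_assoc]
    rw [hP₃, hRH]
  have hQ : (W₁ᴴ * (W₂ᴴ * W₃))ᴴ * (W₁ᴴ * (W₂ᴴ * W₃)) = 1 := by
    simp only [Matrix.conjTranspose_mul, Matrix.conjTranspose_conjTranspose,
      Matrix.mul_assoc, c1', c2', w3]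
  -- assemble
  have hg := gram3 (m2v A) (m2v (B * W₁)) (m2v (C * (W₂ * W₁))) hun hvn hwn
  rw [norm_inner_symm (m2v A) (m2v (B * W₁)), hvu, hwv,
    norm_inner_symm (m2v A) (m2v (C * (W₂ * W₁))), hwu] at hg
  have h1 : ‖H₁.trace‖ = H₁.trace.re := cnorm_of_nonneg (trace_nonneg' hH₁)
  have h2 : ‖H₂.trace‖ = H₂.trace.re := cnorm_of_nonneg (trace_nonneg' hH₂)
  have h3 : ‖((W₁ᴴ * (W₂ᴴ * W₃)) * (R * R)).trace‖ ≤ H₃.trace.re := by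
    calc ‖((W₁ᴴ * (W₂ᴴ * W₃)) * (R * R)).trace‖ ≤ ((R * R).trace).re :=
          cs_bound _ R hQ hRh
      _ = H₃.trace.re := by rw [hRH]
  rw [h1, h2] at hg
  linarith


end FidelityHelpers

/-- The fidelity `F(ρ, σ) = tr √(√ρ σ √ρ)` of two positive semidefinite
matrices. -/
noncomputable def fidelity {n : ℕ} (ρ σ : Matrix (Fin n) (Fin n) ℂ)
    (hρ : ρ.PosSemidef) (hσ : σ.PosSemidef) : ℝ := by
  have h : (hρ.sqrt * σ * hρ.sqrt).PosSemidef := by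
    have := hσ.mul_mul_conjTranspose_same hρ.sqrt
    rwa [hρ.posSemidef_sqrt.1] at this
  exact (h.sqrt.trace).re

lemma sqrt_congr {n : ℕ} {A B : Matrix (Fin n) (Fin n) ℂ} (h : A = B)
    (hA : A.PosSemidef) (hB : B.PosSemidef) : hA.sqrt = hB.sqrt := by
  subst h; rfl

lemma fidelity_eq {n : ℕ} (ρ σ : Matrix (Fin n) (Fin n) ℂ)
    (hρ : ρ.PosSemidef) (hσ : σ.PosSemidef)
    (h' : (hρ.sqrt * σ * hρ.sqrt).PosSemidef) :
    fidelity ρ σ hρ hσ = (h'.sqrt.trace).re := rfl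

lemma fidelity_eq' {n : ℕ} (ρ σ : Matrix (Fin n) (Fin n) ℂ)
    (hρ : ρ.PosSemidef) (hσ : σ.PosSemidef) :
    fidelity ρ σ hρ hσ
      = ((Matrix.posSemidef_conjTranspose_mul_self (hσ.sqrt * hρ.sqrt)).sqrt.trace).re := by
  have hm : hρ.sqrt * σ * hρ.sqrt = (hσ.sqrt * hρ.sqrt)ᴴ * (hσ.sqrt * hρ.sqrt) := by
    rw [Matrix.conjTranspose_mul, hρ.posSemidef_sqrt.1, hσ.posSemidef_sqrt.1,
      Matrix.mul_assoc hρ.sqrt hσ.sqrt _, ← Matrix.mul_assoc hσ.sqrt hσ.sqrt hρ.sqrt,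
      hσ.sqrt_mul_self, ← Matrix.mul_assoc]
  have h' : (hρ.sqrt * σ * hρ.sqrt).PosSemidef := by
    rw [hm]; exact Matrix.posSemidef_conjTranspose_mul_self _
  rw [fidelity_eq ρ σ hρ hσ h', sqrt_congr hm h' (Matrix.posSemidef_conjTranspose_mul_self _)]

/-- For any three density operators `ρ, σ, ξ` on a
finite-dimensional Hilbert space, `F(ρ, σ)² + F(σ, ξ)² ≤ 1 + F(ρ, ξ)`. -/
theorem stmt6 {n : ℕ} (ρ σ ξ : Matrix (Fin n) (Fin n) ℂ)
    (hρ : ρ.PosSemidef) (hσ : σ.PosSemidef) (hξ : ξ.PosSemidef)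
    (hρ1 : ρ.trace = 1) (hσ1 : σ.trace = 1) (hξ1 : ξ.trace = 1) :
    fidelity ρ σ hρ hσ ^ 2 + fidelity σ ξ hσ hξ ^ 2 ≤ 1 + fidelity ρ ξ hρ hξ := by
  obtain ⟨W₁, hW₁, hP₁⟩ := polar_decomp (hσ.sqrt * hρ.sqrt)
  obtain ⟨W₂, hW₂, hP₂⟩ := polar_decomp (hξ.sqrt * hσ.sqrt)
  obtain ⟨W₃, hW₃, hP₃⟩ := polar_decomp (hξ.sqrt * hρ.sqrt)
  rw [fidelity_eq' ρ σ hρ hσ, fidelity_eq' σ ξ hσ hξ, fidelity_eq' ρ ξ hρ hξ]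
  exact core hρ.sqrt hσ.sqrt hξ.sqrt W₁ W₂ W₃ _ _ _
    ((Matrix.posSemidef_conjTranspose_mul_self (hξ.sqrt * hρ.sqrt)).posSemidef_sqrt).sqrt
    hρ.posSemidef_sqrt.1 hσ.posSemidef_sqrt.1 hξ.posSemidef_sqrt.1
    (by rw [hρ.sqrt_mul_self, hρ1]) (by rw [hσ.sqrt_mul_self, hσ1])
    (by rw [hξ.sqrt_mul_self, hξ1])
    hW₁ hW₂ hW₃
    (Matrix.posSemidef_conjTranspose_mul_self _).posSemidef_sqrt
    (Matrix.posSemidef_conjTranspose_mul_self _).posSemidef_sqrt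
    (Matrix.posSemidef_conjTranspose_mul_self _).posSemidef_sqrt
    hP₁ hP₂ hP₃
    ((Matrix.posSemidef_conjTranspose_mul_self (hξ.sqrt * hρ.sqrt)).posSemidef_sqrt).posSemidef_sqrt.1
    ((Matrix.posSemidef_conjTranspose_mul_self (hξ.sqrt * hρ.sqrt)).posSemidef_sqrt).sqrt_mul_self
end
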